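/- Let F be a homeomorphism of ℝ² commuting with the unit translations S,T, and suppose its rotation set ρ_{S,T}(F) is contained in a compact set 𝒪 ⊂ ℝ². Then there exists k₀ ∈ ℕ such that for every integer k with |k| ≥ k₀, the displacement set D(F^k) = {F^k(z) - z : z ∈ ℝ²} is contained in k·𝒪', where 𝒪' is any compact neighbourhood of 𝒪 (more precisely: for any compact neighbourhood 𝒪' of ρ_{S,T}(F), D(F^k) ⊆ k·𝒪' for all |k| sufficiently large). -/

import Mathlib

open Filter Topology Pointwise

noncomputable section

/-- Natural iterates of a homeomorphism. -/
def hnpow {X : Type*} [TopologicalSpace X] (F : X ≃ₜ X) : ℕ → X ≃ₜ X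
  | 0 => Homeomorph.refl X
  | n + 1 => (hnpow F n).trans F

/-- Integer iterates of a homeomorphism. -/
def hzpow {X : Type*} [TopologicalSpace X] (F : X ≃ₜ X) : ℤ → X ≃ₜ X
  | Int.ofNat n => hnpow F n
  | Int.negSucc n => hnpow F.symm (n + 1)

/-- `act U V G m n p = U^{-m} ∘ V^{-n} ∘ G^{p}`. -/
def act {X : Type*} [TopologicalSpace X] (U V G : X ≃ₜ X) (m n p : ℤ) : X ≃ₜ X :=
  ((hzpow G p).trans (hzpow V (-n))).trans (hzpow U (-m))

/-- A sequence in `ℤ³` tends to infinity. -/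
def tendsInfty (s : ℕ → ℤ × ℤ × ℤ) : Prop :=
  Tendsto (fun k => |(s k).1| + |(s k).2.1| + |(s k).2.2|) atTop atTop

/-- The rotation set of `G` with respect to `U` and `V`, defined via compact sets:
`w` belongs to it iff there are a compact `K` and `(m_k, n_k, p_k) ∈ ℤ³` tending to infinity
with `U^{-m_k} V^{-n_k} G^{p_k}(K) ∩ K ≠ ∅` and `(m_k/p_k, n_k/p_k) → w`. -/
def rotSet {X : Type*} [TopologicalSpace X] (G U V : X ≃ₜ X) : Set (ℝ × ℝ) :=
  {w | ∃ K : Set X, IsCompact K ∧ ∃ s : ℕ → ℤ × ℤ × ℤ,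
    (∀ k, ((act U V G (s k).1 (s k).2.1 (s k).2.2) '' K ∩ K).Nonempty) ∧
    tendsInfty s ∧
    Tendsto (fun k => ((((s k).1 : ℝ) / ((s k).2.2 : ℝ), ((s k).2.1 : ℝ) / ((s k).2.2 : ℝ)) : ℝ × ℝ))
      atTop (nhds w)}

/-- Two homeomorphisms commute. -/
def commuting {X : Type*} [TopologicalSpace X] (F G : X ≃ₜ X) : Prop := ∀ x, F (G x) = G (F x)

/-- The unit horizontal translation `S : (x,y) ↦ (x+1,y)`. -/
def S2 : (ℝ × ℝ) ≃ₜ (ℝ × ℝ) := Homeomorph.addRight ((1 : ℝ), (0 : ℝ))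

/-- The unit vertical translation `T : (x,y) ↦ (x,y+1)`. -/
def T2 : (ℝ × ℝ) ≃ₜ (ℝ × ℝ) := Homeomorph.addRight ((0 : ℝ), (1 : ℝ))

/-- The displacement set `D(H) = {H(z) - z : z ∈ ℝ²}`. -/
def disp (H : (ℝ × ℝ) ≃ₜ (ℝ × ℝ)) : Set (ℝ × ℝ) := Set.range fun z => H z - z

/-- `mk2 F a b c = S^a ∘ T^b ∘ F^{-c}`. -/
def mk2 (F : (ℝ × ℝ) ≃ₜ (ℝ × ℝ)) (a b c : ℤ) : (ℝ × ℝ) ≃ₜ (ℝ × ℝ) :=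
  ((hzpow F (-c)).trans (hzpow T2 b)).trans (hzpow S2 a)

/-- The projective action of an integer 3×3 matrix in the affine chart. -/
def lhatZ (L : Matrix (Fin 3) (Fin 3) ℤ) (p : ℝ × ℝ) : ℝ × ℝ :=
  (((L 0 0 : ℝ) * p.1 + (L 0 1 : ℝ) * p.2 + (L 0 2 : ℝ)) /
      ((L 2 0 : ℝ) * p.1 + (L 2 1 : ℝ) * p.2 + (L 2 2 : ℝ)),
   ((L 1 0 : ℝ) * p.1 + (L 1 1 : ℝ) * p.2 + (L 1 2 : ℝ)) /
      ((L 2 0 : ℝ) * p.1 + (L 2 1 : ℝ) * p.2 + (L 2 2 : ℝ)))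

namespace Stmt2Aux

lemma hnpow_succ_apply {X : Type*} [TopologicalSpace X] (F : X ≃ₜ X) (n : ℕ) (x : X) :
    hnpow F (n+1) x = F (hnpow F n x) := rfl

/-- translation powers -/
lemma hnpow_translation (c : ℝ × ℝ) (G : (ℝ×ℝ) ≃ₜ (ℝ×ℝ)) (hG : ∀ y, G y = y + c) :
    ∀ (n : ℕ) (y), hnpow G n y = y + n • c := by
  intro n
  induction n with
  | zero => intro y; simp [hnpow]
  | succ n ih =>
    intro y
    rw [hnpow_succ_apply, ih, hG, succ_nsmul, add_assoc]

lemma symm_translation (c : ℝ × ℝ) (G : (ℝ×ℝ) ≃ₜ (ℝ×ℝ)) (hG : ∀ y, G y = y + c) :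
    ∀ y, G.symm y = y + (-c) := by
  intro y
  have h : G (y + (-c)) = y := by rw [hG]; abel
  have := congrArg G.symm h
  simpa using this.symm

lemma hzpow_translation (c : ℝ × ℝ) (G : (ℝ×ℝ) ≃ₜ (ℝ×ℝ)) (hG : ∀ y, G y = y + c) :
    ∀ (a : ℤ) (y), hzpow G a y = y + a • c := by
  intro a y
  cases a with
  | ofNat n =>
    show hnpow G n y = _
    rw [hnpow_translation c G hG, Int.ofNat_eq_coe, natCast_zsmul]
  | negSucc n =>
    show hnpow G.symm (n+1) y = _
    rw [hnpow_translation (-c) G.symm (symm_translation c G hG), negSucc_zsmul, smul_neg]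

lemma S2_apply (y : ℝ × ℝ) : S2 y = y + ((1:ℝ), (0:ℝ)) := rfl
lemma T2_apply (y : ℝ × ℝ) : T2 y = y + ((0:ℝ), (1:ℝ)) := rfl

lemma hzpow_S2 (a : ℤ) (y : ℝ × ℝ) : hzpow S2 a y = y + ((a:ℝ), 0) := by
  rw [hzpow_translation _ _ S2_apply]
  simp [Prod.smul_def]

lemma hzpow_T2 (b : ℤ) (y : ℝ × ℝ) : hzpow T2 b y = y + (0, (b:ℝ)) := by
  rw [hzpow_translation _ _ T2_apply]
  simp [Prod.smul_def]

lemma act_eval (F : (ℝ×ℝ) ≃ₜ (ℝ×ℝ)) (m n p : ℤ) (x : ℝ×ℝ) :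
    act S2 T2 F m n p x = hzpow F p x + ((-m : ℝ), (-n : ℝ)) := by
  show hzpow S2 (-m) (hzpow T2 (-n) (hzpow F p x)) = _
  rw [hzpow_T2, hzpow_S2]
  push_cast
  rw [add_assoc]
  congr 1
  exact Prod.ext (by simp) (by simp)


def commuting {X : Type*} [TopologicalSpace X] (F G : X ≃ₜ X) : Prop := ∀ x, F (G x) = G (F x)



/-- equivariance under all integer translations -/
def eqv (G : (ℝ×ℝ) ≃ₜ (ℝ×ℝ)) : Prop :=
  ∀ (a b : ℤ) (z : ℝ×ℝ), G (z + ((a:ℝ), (b:ℝ))) = G z + ((a:ℝ), (b:ℝ))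

lemma eqv_step (G : (ℝ×ℝ) ≃ₜ (ℝ×ℝ)) (u : ℝ×ℝ) (h : ∀ z, G (z + u) = G z + u) :
    ∀ (a : ℤ) (z : ℝ×ℝ), G (z + a • u) = G z + a • u := by
  have hneg : ∀ z, G (z + (-u)) = G z + (-u) := by
    intro z
    have := h (z + (-u))
    rw [add_assoc] at this
    simp only [neg_add_cancel, add_zero] at this
    rw [this]; abel
  intro a
  induction a using Int.induction_on with
  | zero => simp
  | succ n ih =>
    intro z
    have : ((n:ℤ)+1) • u = (n:ℤ) • u + u := by rw [add_smul, one_smul]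
    rw [this, ← add_assoc, h, ih, add_assoc]
  | pred n ih =>
    intro z
    have : (-(n:ℤ)-1) • u = (-(n:ℤ)) • u + (-u) := by rw [sub_smul, one_smul, sub_eq_add_neg]
    rw [this, ← add_assoc, hneg, ih, add_assoc]

lemma eqv_of_commuting (F : (ℝ×ℝ) ≃ₜ (ℝ×ℝ)) (hS : commuting F S2) (hT : commuting F T2) :
    eqv F := by
  have h1 : ∀ z, F (z + ((1:ℝ),(0:ℝ))) = F z + ((1:ℝ),(0:ℝ)) := fun z => hS z
  have h2 : ∀ z, F (z + ((0:ℝ),(1:ℝ))) = F z + ((0:ℝ),(1:ℝ)) := fun z => hT z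
  intro a b z
  have e1 := eqv_step F _ h1 a
  have e2 := eqv_step F _ h2 b
  have hv : ((a:ℝ), (b:ℝ)) = a • ((1:ℝ),(0:ℝ)) + b • ((0:ℝ),(1:ℝ)) := by
    simp [Prod.smul_def, Prod.ext_iff]
  rw [hv, ← add_assoc, e2, e1, add_assoc]

lemma eqv_symm {G : (ℝ×ℝ) ≃ₜ (ℝ×ℝ)} (h : eqv G) : eqv G.symm := by
  intro a b z
  have hw : G (G.symm z + ((a:ℝ),(b:ℝ))) = z + ((a:ℝ),(b:ℝ)) := by
    rw [h, Homeomorph.apply_symm_apply]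
  have h2 := congrArg G.symm hw
  rw [Homeomorph.symm_apply_apply] at h2
  exact h2.symm

lemma eqv_hnpow {G : (ℝ×ℝ) ≃ₜ (ℝ×ℝ)} (h : eqv G) (n : ℕ) : eqv (hnpow G n) := by
  induction n with
  | zero => intro a b z; rfl
  | succ n ih =>
    intro a b z
    show G (hnpow G n (z + _)) = _
    rw [ih, h]
    rfl

lemma eqv_hzpow {G : (ℝ×ℝ) ≃ₜ (ℝ×ℝ)} (h : eqv G) (k : ℤ) : eqv (hzpow G k) := by
  cases k with
  | ofNat n => exact eqv_hnpow h n
  | negSucc n => exact eqv_hnpow (eqv_symm h) (n+1)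

/-- displacement invariance under integer translation -/
lemma eqv_disp {G : (ℝ×ℝ) ≃ₜ (ℝ×ℝ)} (h : eqv G) (a b : ℤ) (z : ℝ×ℝ) :
    G (z - ((a:ℝ),(b:ℝ))) - (z - ((a:ℝ),(b:ℝ))) = G z - z := by
  have := h a b (z - ((a:ℝ),(b:ℝ)))
  have h2 : z - ((a:ℝ),(b:ℝ)) + ((a:ℝ),(b:ℝ)) = z := by abel
  rw [h2] at this
  rw [sub_sub_eq_add_sub, ← this]


lemma exists_bound (F : (ℝ×ℝ) ≃ₜ (ℝ×ℝ)) (hF : eqv F) :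
    ∃ M : ℝ, 0 < M ∧ (∀ z, ‖F z - z‖ ≤ M) ∧ (∀ z, ‖F.symm z - z‖ ≤ M) := by
  obtain ⟨C, hC⟩ := (isCompact_Icc (a := ((0:ℝ),(0:ℝ))) (b := ((1:ℝ),(1:ℝ)))).exists_bound_of_continuousOn
    ((F.continuous.sub continuous_id).continuousOn)
  have hmain : ∀ z : ℝ × ℝ, ‖F z - z‖ ≤ max C 1 := by
    intro z
    set a := ⌊z.1⌋
    set b := ⌊z.2⌋
    have h1 : (0:ℝ) ≤ z.1 - (a:ℝ) := by rw [Int.self_sub_floor]; exact Int.fract_nonneg _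
    have h2 : (0:ℝ) ≤ z.2 - (b:ℝ) := by rw [Int.self_sub_floor]; exact Int.fract_nonneg _
    have h3 : z.1 - (a:ℝ) ≤ 1 := by rw [Int.self_sub_floor]; exact (Int.fract_lt_one _).le
    have h4 : z.2 - (b:ℝ) ≤ 1 := by rw [Int.self_sub_floor]; exact (Int.fract_lt_one _).le
    have hmem : z - ((a:ℝ),(b:ℝ)) ∈ Set.Icc ((0:ℝ),(0:ℝ)) ((1:ℝ),(1:ℝ)) := by
      simp only [Set.mem_Icc, Prod.le_def, Prod.fst_sub, Prod.snd_sub]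
      exact ⟨⟨h1, h2⟩, ⟨h3, h4⟩⟩
    have := hC _ hmem
    have this : ‖F (z - ((a:ℝ),(b:ℝ))) - (z - ((a:ℝ),(b:ℝ)))‖ ≤ C := this
    rw [eqv_disp hF a b z] at this
    exact this.trans (le_max_left _ _)
  refine ⟨max C 1, lt_of_lt_of_le one_pos (le_max_right C 1), hmain, ?_⟩
  intro z
  have : F.symm z - z = -(F (F.symm z) - F.symm z) := by
    rw [Homeomorph.apply_symm_apply]; abel
  rw [this, norm_neg]
  exact hmain _

lemma hnpow_bound (G : (ℝ×ℝ) ≃ₜ (ℝ×ℝ)) (M : ℝ) (h : ∀ z, ‖G z - z‖ ≤ M) :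
    ∀ (n : ℕ) (z), ‖hnpow G n z - z‖ ≤ (n:ℝ) * M := by
  intro n
  induction n with
  | zero => intro z; simp [hnpow]
  | succ n ih =>
    intro z
    have : hnpow G (n+1) z - z = (G (hnpow G n z) - hnpow G n z) + (hnpow G n z - z) := by
      rw [hnpow_succ_apply]; abel
    rw [this]
    calc ‖_ + _‖ ≤ ‖G (hnpow G n z) - hnpow G n z‖ + ‖hnpow G n z - z‖ := norm_add_le _ _
      _ ≤ M + (n:ℝ) * M := add_le_add (h _) (ih z)
      _ = ((n:ℕ)+1 : ℝ) * M := by ring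
      _ = ((n+1 : ℕ) : ℝ) * M := by push_cast; ring

lemma hzpow_bound (F : (ℝ×ℝ) ≃ₜ (ℝ×ℝ)) (M : ℝ)
    (h1 : ∀ z, ‖F z - z‖ ≤ M) (h2 : ∀ z, ‖F.symm z - z‖ ≤ M) :
    ∀ (k : ℤ) (z), ‖hzpow F k z - z‖ ≤ |(k:ℝ)| * M := by
  intro k z
  cases k with
  | ofNat n =>
    have := hnpow_bound F M h1 n z
    show ‖hnpow F n z - z‖ ≤ _
    simpa using this
  | negSucc n =>
    have := hnpow_bound F.symm M h2 (n+1) z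
    show ‖hnpow F.symm (n+1) z - z‖ ≤ _
    have habs : |((Int.negSucc n : ℤ) : ℝ)| = ((n:ℝ)+1) := by
      rw [Int.cast_negSucc]
      push_cast
      rw [abs_neg, abs_of_nonneg (by positivity)]
    rw [habs]
    simpa using this

end Stmt2Aux

theorem stmt2 (F : (ℝ × ℝ) ≃ₜ (ℝ × ℝ)) (hS : commuting F S2) (hT : commuting F T2)
    (O' : Set (ℝ × ℝ)) (hO'c : IsCompact O') (hO'n : rotSet F S2 T2 ⊆ interior O') :
    ∃ k₀ : ℕ, ∀ k : ℤ, (k₀ : ℤ) ≤ |k| → disp (hzpow F k) ⊆ (k : ℝ) • O' := by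
  classical
  by_contra hcon
  push_neg at hcon
  have hF : Stmt2Aux.eqv F := Stmt2Aux.eqv_of_commuting F hS hT
  obtain ⟨M, hM0, hM1, hM2⟩ := Stmt2Aux.exists_bound F hF
  have hHsel : ∀ j : ℕ, ∃ (k : ℤ) (z : ℝ×ℝ),
      ((j:ℤ)+1) ≤ |k| ∧ hzpow F k z - z ∉ (k:ℝ) • O' := by
    intro j
    obtain ⟨k, hk, hsub⟩ := hcon (j+1)
    rw [Set.not_subset] at hsub
    obtain ⟨dd, hd, hdo⟩ := hsub
    obtain ⟨zz, hzz⟩ := hd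
    exact ⟨k, zz, by exact_mod_cast hk, by rw [show (hzpow F k) zz - zz = dd from hzz]; exact hdo⟩
  choose k z hk hz using hHsel
  have hkabs : ∀ j : ℕ, ((j:ℝ)+1) ≤ |(k j : ℝ)| := by
    intro j
    have h1 := hk j
    have h2 : (((j:ℤ)+1 : ℤ) : ℝ) ≤ ((|k j| : ℤ) : ℝ) := by exact_mod_cast h1
    rw [Int.cast_abs] at h2
    push_cast at h2
    linarith
  have hk0 : ∀ j, (k j : ℝ) ≠ 0 := by
    intro j h
    have h1 := hkabs j
    rw [h, abs_zero] at h1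
    have : (0:ℝ) ≤ (j:ℝ) := Nat.cast_nonneg j
    linarith
  set d : ℕ → ℝ×ℝ := fun j => hzpow F (k j) (z j) - z j with hdd
  set v : ℕ → ℝ×ℝ := fun j => (k j : ℝ)⁻¹ • d j with hvv
  have hvnot : ∀ j, v j ∉ O' := by
    intro j hmem
    exact hz j ((Set.mem_smul_set_iff_inv_smul_mem₀ (hk0 j) O' (d j)).2 hmem)
  have hdbound : ∀ j, ‖d j‖ ≤ |(k j : ℝ)| * M :=
    fun j => Stmt2Aux.hzpow_bound F M hM1 hM2 (k j) (z j)
  have hvball : ∀ j, v j ∈ Metric.closedBall (0:ℝ×ℝ) M := by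
    intro j
    rw [Metric.mem_closedBall, dist_zero_right]
    have hkpos : (0:ℝ) < |(k j : ℝ)| := abs_pos.mpr (hk0 j)
    have : ‖v j‖ = |(k j:ℝ)|⁻¹ * ‖d j‖ := by
      rw [hvv]
      simp [norm_smul, Real.norm_eq_abs]
    rw [this]
    calc |(k j:ℝ)|⁻¹ * ‖d j‖ ≤ |(k j:ℝ)|⁻¹ * (|(k j:ℝ)| * M) := by
          gcongr
          exact hdbound j
      _ = M := by field_simp
  obtain ⟨w, hwB, φ, hφ, hconv⟩ := (isCompact_closedBall (0:ℝ×ℝ) M).tendsto_subseq hvball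
  have hwnot : w ∉ interior O' := by
    have : w ∈ closure O'ᶜ :=
      mem_closure_of_tendsto hconv (Filter.Eventually.of_forall fun i => hvnot (φ i))
    rwa [closure_compl] at this
  apply hwnot
  apply hO'n
  -- now show w ∈ rotSet F S2 T2
  set z' : ℕ → ℝ×ℝ := fun j => z j - ((⌊(z j).1⌋ : ℝ), (⌊(z j).2⌋ : ℝ)) with hz'
  have hdisp' : ∀ j, hzpow F (k j) (z' j) - z' j = d j := fun j =>
    Stmt2Aux.eqv_disp (Stmt2Aux.eqv_hzpow hF (k j)) _ _ (z j)
  set m : ℕ → ℤ := fun j => ⌊(hzpow F (k j) (z' j)).1⌋ with hmm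
  set n : ℕ → ℤ := fun j => ⌊(hzpow F (k j) (z' j)).2⌋ with hnn
  have hnorm2 : ∀ u : ℝ×ℝ, |u.1| ≤ 1 → |u.2| ≤ 1 → u ∈ Metric.closedBall (0:ℝ×ℝ) 2 := by
    intro u h1 h2
    rw [Metric.mem_closedBall, dist_zero_right, Prod.norm_def]
    rw [Real.norm_eq_abs, Real.norm_eq_abs]
    exact sup_le (h1.trans one_le_two) (h2.trans one_le_two)
  have hz'1 : ∀ j, (z' j).1 = Int.fract (z j).1 := by
    intro j
    show (z j).1 - ((⌊(z j).1⌋ : ℤ) : ℝ) = _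
    rw [Int.self_sub_floor]
  have hz'2 : ∀ j, (z' j).2 = Int.fract (z j).2 := by
    intro j
    show (z j).2 - ((⌊(z j).2⌋ : ℤ) : ℝ) = _
    rw [Int.self_sub_floor]
  have hz'K : ∀ j, z' j ∈ Metric.closedBall (0:ℝ×ℝ) 2 := by
    intro j
    apply hnorm2
    · rw [hz'1, abs_of_nonneg (Int.fract_nonneg _)]
      exact (Int.fract_lt_one _).le
    · rw [hz'2, abs_of_nonneg (Int.fract_nonneg _)]
      exact (Int.fract_lt_one _).le
  refine ⟨Metric.closedBall (0:ℝ×ℝ) 2, isCompact_closedBall _ _,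
    fun i => (m (φ i), n (φ i), k (φ i)), ?_, ?_, ?_⟩
  · -- nonempty intersections
    intro i
    refine ⟨act S2 T2 F (m (φ i)) (n (φ i)) (k (φ i)) (z' (φ i)),
      Set.mem_image_of_mem _ (hz'K (φ i)), ?_⟩
    rw [Stmt2Aux.act_eval]
    apply hnorm2
    · have : (hzpow F (k (φ i)) (z' (φ i)) + ((-(m (φ i)) : ℝ), (-(n (φ i)) : ℝ))).1
          = Int.fract (hzpow F (k (φ i)) (z' (φ i))).1 := by
        show (hzpow F (k (φ i)) (z' (φ i))).1 + (-((m (φ i) : ℤ) : ℝ)) = _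
        rw [Int.fract, hmm]
        ring
      rw [this, abs_of_nonneg (Int.fract_nonneg _)]
      exact (Int.fract_lt_one _).le
    · have : (hzpow F (k (φ i)) (z' (φ i)) + ((-(m (φ i)) : ℝ), (-(n (φ i)) : ℝ))).2
          = Int.fract (hzpow F (k (φ i)) (z' (φ i))).2 := by
        show (hzpow F (k (φ i)) (z' (φ i))).2 + (-((n (φ i) : ℤ) : ℝ)) = _
        rw [Int.fract, hnn]
        ring
      rw [this, abs_of_nonneg (Int.fract_nonneg _)]
      exact (Int.fract_lt_one _).le
  · -- tendsInfty
    apply tendsto_atTop_mono (f := fun i : ℕ => (i : ℤ))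
    · intro i
      have h1 : ((i:ℤ)) ≤ |k (φ i)| := by
        have := hk (φ i)
        have h2 : (i:ℤ) ≤ (φ i : ℤ) := by exact_mod_cast hφ.le_apply
        omega
      have h2 : (0:ℤ) ≤ |m (φ i)| := abs_nonneg _
      have h3 : (0:ℤ) ≤ |n (φ i)| := abs_nonneg _
      simp only []
      omega
    · exact tendsto_natCast_atTop_atTop
  · -- convergence of quotients
    have hclose1 : ∀ j, |(m j : ℝ) - (d j).1| ≤ 2 := by
      intro j
      have hp1 : (hzpow F (k j) (z' j)).1 = (z' j).1 + (d j).1 := by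
        have := hdisp' j
        have h2 := congrArg Prod.fst this
        simp only [Prod.fst_sub] at h2
        linarith
      have hfl : |(m j : ℝ) - (hzpow F (k j) (z' j)).1| ≤ 1 := by
        rw [abs_le]
        constructor
        · have := Int.lt_floor_add_one (hzpow F (k j) (z' j)).1
          simp only [hmm]
          push_cast
          linarith
        · have := Int.floor_le (hzpow F (k j) (z' j)).1
          simp only [hmm]
          linarith
      have hz1 : |(z' j).1| ≤ 1 := by
        rw [hz'1, abs_of_nonneg (Int.fract_nonneg _)]
        exact (Int.fract_lt_one _).le
      have : (m j : ℝ) - (d j).1 = ((m j : ℝ) - (hzpow F (k j) (z' j)).1) + (z' j).1 := by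
        rw [hp1]; ring
      rw [this]
      calc |_| ≤ |(m j : ℝ) - (hzpow F (k j) (z' j)).1| + |(z' j).1| := abs_add_le _ _
        _ ≤ 1 + 1 := add_le_add hfl hz1
        _ = 2 := by norm_num
    have hclose2 : ∀ j, |(n j : ℝ) - (d j).2| ≤ 2 := by
      intro j
      have hp1 : (hzpow F (k j) (z' j)).2 = (z' j).2 + (d j).2 := by
        have := hdisp' j
        have h2 := congrArg Prod.snd this
        simp only [Prod.snd_sub] at h2
        linarith
      have hfl : |(n j : ℝ) - (hzpow F (k j) (z' j)).2| ≤ 1 := by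
        rw [abs_le]
        constructor
        · have := Int.lt_floor_add_one (hzpow F (k j) (z' j)).2
          simp only [hnn]
          push_cast
          linarith
        · have := Int.floor_le (hzpow F (k j) (z' j)).2
          simp only [hnn]
          linarith
      have hz1 : |(z' j).2| ≤ 1 := by
        rw [hz'2, abs_of_nonneg (Int.fract_nonneg _)]
        exact (Int.fract_lt_one _).le
      have : (n j : ℝ) - (d j).2 = ((n j : ℝ) - (hzpow F (k j) (z' j)).2) + (z' j).2 := by
        rw [hp1]; ring
      rw [this]
      calc |_| ≤ |(n j : ℝ) - (hzpow F (k j) (z' j)).2| + |(z' j).2| := abs_add_le _ _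
        _ ≤ 1 + 1 := add_le_add hfl hz1
        _ = 2 := by norm_num
    have hiabs : ∀ i : ℕ, ((i:ℝ)+1) ≤ |(k (φ i) : ℝ)| := by
      intro i
      have h1 : ((i:ℝ)+1) ≤ ((φ i : ℝ)+1) := by
        have : (i:ℝ) ≤ (φ i : ℝ) := by exact_mod_cast hφ.le_apply
        linarith
      exact h1.trans (hkabs (φ i))
    have hzero : Tendsto (fun i : ℕ => 2/((i:ℝ)+1)) atTop (𝓝 0) :=
      Tendsto.div_atTop tendsto_const_nhds
        (tendsto_atTop_add_const_right _ 1 tendsto_natCast_atTop_atTop)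
    have hv1eq : ∀ j, (v j).1 = (d j).1 / (k j : ℝ) := by
      intro j
      rw [hvv]
      simp [Prod.smul_def]
      ring
    have hv2eq : ∀ j, (v j).2 = (d j).2 / (k j : ℝ) := by
      intro j
      rw [hvv]
      simp [Prod.smul_def]
      ring
    have hterm1 : Tendsto (fun i => (m (φ i):ℝ)/(k (φ i):ℝ) - (v (φ i)).1) atTop (𝓝 0) := by
      apply squeeze_zero_norm (a := fun i : ℕ => 2/((i:ℝ)+1)) _ hzero
      intro i
      rw [hv1eq, div_sub_div_same, Real.norm_eq_abs, abs_div]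
      exact div_le_div₀ (by norm_num) (hclose1 _) (by positivity) (hiabs i)
    have hterm2 : Tendsto (fun i => (n (φ i):ℝ)/(k (φ i):ℝ) - (v (φ i)).2) atTop (𝓝 0) := by
      apply squeeze_zero_norm (a := fun i : ℕ => 2/((i:ℝ)+1)) _ hzero
      intro i
      rw [hv2eq, div_sub_div_same, Real.norm_eq_abs, abs_div]
      exact div_le_div₀ (by norm_num) (hclose2 _) (by positivity) (hiabs i)
    have hv1 : Tendsto (fun i => (v (φ i)).1) atTop (𝓝 w.1) :=
      (continuous_fst.tendsto w).comp hconv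
    have hv2 : Tendsto (fun i => (v (φ i)).2) atTop (𝓝 w.2) :=
      (continuous_snd.tendsto w).comp hconv
    have h1 : Tendsto (fun i => (m (φ i):ℝ)/(k (φ i):ℝ)) atTop (𝓝 w.1) := by
      have := hterm1.add hv1
      rw [zero_add] at this
      simpa using this
    have h2 : Tendsto (fun i => (n (φ i):ℝ)/(k (φ i):ℝ)) atTop (𝓝 w.2) := by
      have := hterm2.add hv2
      rw [zero_add] at this
      simpa using this
    have := h1.prodMk_nhds h2
    simpa using this
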